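/- Let F ⊊ 2^[n] be a k-antichain saturated family with skipless chain decomposition C^1, ..., C^{k-1}, and let F_t denote the sets of size t in F. Let D(F_t) be the set of (t-1)-sets A ∈ F_{t-1} such that the chain containing A also contains an element of F_t. Then |D(F_t)| = ν(F_t) for all t ∈ [n], where ν(F_t) is the maximum matching number between F_t and its shadow. -/

import Mathlib

/-- A family of finsets that is a chain under inclusion. -/
def IsChainF (C : Finset (Finset ℕ)) : Prop :=
  ∀ A ∈ C, ∀ B ∈ C, A ⊆ B ∨ B ⊆ A

/-- A skipless chain: a chain in which every cardinality between those of two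
members is attained by some member. -/
def SkiplessChain (C : Finset (Finset ℕ)) : Prop :=
  IsChainF C ∧ ∀ A ∈ C, ∀ B ∈ C, ∀ k : ℕ, A.card ≤ k → k ≤ B.card → ∃ D ∈ C, D.card = k

/-- The maximum size of a matching between a family `𝒜` and its shadow in the
containment bipartite graph. -/
noncomputable def nu (𝒜 : Finset (Finset ℕ)) : ℕ :=
  sSup {m | ∃ s ⊆ 𝒜, s.card = m ∧ ∃ f : Finset ℕ → Finset ℕ,
    Set.InjOn f ↑s ∧ ∀ a ∈ s, f a ∈ Finset.shadow 𝒜 ∧ f a ⊆ a}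

/-- The initial segment of the colexicographic order on `t`-element subsets of ℕ
of size `m`. -/
def colexSeg (m t : ℕ) : Finset (Finset ℕ) :=
  ((Finset.range (t + m)).powerset).filter (fun S => S.card = t ∧
    (((Finset.range (t + m)).powerset).filter
      (fun B => B.card = t ∧ toColex B < toColex S)).card < m)

/-- `F` is a `k`-antichain saturated family of subsets of `[n] = {0, …, n-1}`. -/
def AntichainSat (n k : ℕ) (F : Finset (Finset ℕ)) : Prop :=
  (∀ X ∈ F, X ⊆ Finset.range n) ∧
  (¬ ∃ 𝒜 ⊆ F, 𝒜.card = k ∧ IsAntichain (· ⊆ ·) (𝒜 : Set (Finset ℕ))) ∧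
  (∀ X : Finset ℕ, X ⊆ Finset.range n → X ∉ F →
    ∃ 𝒜 ⊆ insert X F, 𝒜.card = k ∧ IsAntichain (· ⊆ ·) (𝒜 : Set (Finset ℕ)))

/-- The antichain saturation number `sat*(n, k)`. -/
noncomputable def satStar (n k : ℕ) : ℕ :=
  sInf {m | ∃ F : Finset (Finset ℕ), AntichainSat n k F ∧ F.card = m}

noncomputable def cAux (k ℓ : ℕ) : ℕ → ℕ
  | 0 => k - 1
  | d + 1 => nu (colexSeg (cAux k ℓ d) (ℓ / 2 - d))

/-- The sequence `c_t` from the paper: `c_t = k - 1` for `t ≥ ⌊ℓ/2⌋` and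
`c_t = ν(C(c_{t+1}, t+1))` for `t < ⌊ℓ/2⌋`. -/
noncomputable def cseq (k ℓ t : ℕ) : ℕ :=
  if ℓ / 2 ≤ t then k - 1 else cAux k ℓ (ℓ / 2 - t)

open Finset


lemma chain_eq_of_card {c : Finset (Finset ℕ)} {A B : Finset ℕ}
    (hc : IsChainF c) (hA : A ∈ c) (hB : B ∈ c) (h : A.card = B.card) : A = B := by
  rcases hc A hA B hB with h' | h'
  · exact Finset.eq_of_subset_of_card_le h' h.ge
  · exact (Finset.eq_of_subset_of_card_le h' h.le).symm

lemma chain_subset_of_card_le {c : Finset (Finset ℕ)} {A B : Finset ℕ}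
    (hc : IsChainF c) (hA : A ∈ c) (hB : B ∈ c) (h : A.card ≤ B.card) : A ⊆ B := by
  rcases hc A hA B hB with h' | h'
  · exact h'
  · exact (Finset.eq_of_subset_of_card_le h' h).ge

lemma lowerPart_skipless {c : Finset (Finset ℕ)} {A : Finset ℕ}
    (hc : SkiplessChain c) (hA : A ∈ c) : SkiplessChain (c.filter (· ⊆ A)) := by
  obtain ⟨hch, hsk⟩ := hc
  constructor
  · intro X hX Y hY
    exact hch X (mem_of_mem_filter _ hX) Y (mem_of_mem_filter _ hY)
  · intro X hX Y hY m hXm hmY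
    have hXc := mem_filter.1 hX
    have hYc := mem_filter.1 hY
    obtain ⟨D, hD, hDm⟩ := hsk X hXc.1 Y hYc.1 m hXm hmY
    rcases hch D hD A hA with h | h
    · exact ⟨D, mem_filter.2 ⟨hD, h⟩, hDm⟩
    · have h1 : m ≤ A.card := hmY.trans (card_le_card hYc.2)
      have h2 : A = D := Finset.eq_of_subset_of_card_le h (by omega)
      exact ⟨D, mem_filter.2 ⟨hD, h2.ge⟩, hDm⟩

lemma upperPart_skipless {c : Finset (Finset ℕ)} {b : Finset ℕ}
    (hc : SkiplessChain c) (hb : b ∈ c) : SkiplessChain (c.filter (b ⊆ ·)) := by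
  obtain ⟨hch, hsk⟩ := hc
  constructor
  · intro X hX Y hY
    exact hch X (mem_of_mem_filter _ hX) Y (mem_of_mem_filter _ hY)
  · intro X hX Y hY m hXm hmY
    have hXc := mem_filter.1 hX
    have hYc := mem_filter.1 hY
    obtain ⟨D, hD, hDm⟩ := hsk X hXc.1 Y hYc.1 m hXm hmY
    rcases hch D hD b hb with h | h
    · have h1 : b.card ≤ m := (card_le_card hXc.2).trans hXm
      have h2 : D = b := Finset.eq_of_subset_of_card_le h (by omega)
      exact ⟨D, mem_filter.2 ⟨hD, h2.ge⟩, hDm⟩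
    · exact ⟨D, mem_filter.2 ⟨hD, h⟩, hDm⟩

lemma merge_chain {c₁ c₂ : Finset (Finset ℕ)}
    (h1 : IsChainF c₁) (h2 : IsChainF c₂)
    (hcross : ∀ X ∈ c₁, ∀ Y ∈ c₂, X ⊆ Y) : IsChainF (c₁ ∪ c₂) := by
  intro X hX Y hY
  rcases mem_union.1 hX with hX1 | hX2 <;> rcases mem_union.1 hY with hY1 | hY2
  · exact h1 X hX1 Y hY1
  · exact Or.inl (hcross X hX1 Y hY2)
  · exact Or.inr (hcross Y hY1 X hX2)
  · exact h2 X hX2 Y hY2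

lemma merge_skipless {c₁ c₂ : Finset (Finset ℕ)} {A a : Finset ℕ}
    (h1 : SkiplessChain c₁) (h2 : SkiplessChain c₂)
    (htop : ∀ X ∈ c₁, X ⊆ A) (hbot : ∀ X ∈ c₂, a ⊆ X)
    (hA : A ∈ c₁) (ha : a ∈ c₂) (hAa : A ⊆ a) (hcard : A.card + 1 = a.card) :
    SkiplessChain (c₁ ∪ c₂) := by
  refine ⟨merge_chain h1.1 h2.1 (fun X hX Y hY => (htop X hX).trans ((hAa).trans (hbot Y hY))), ?_⟩
  intro X hX Y hY m hXm hmY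
  rcases mem_union.1 hX with hX1 | hX2 <;> rcases mem_union.1 hY with hY1 | hY2
  · obtain ⟨D, hD, hDm⟩ := h1.2 X hX1 Y hY1 m hXm hmY
    exact ⟨D, mem_union_left _ hD, hDm⟩
  · by_cases hm : m ≤ A.card
    · obtain ⟨D, hD, hDm⟩ := h1.2 X hX1 A hA m hXm hm
      exact ⟨D, mem_union_left _ hD, hDm⟩
    · obtain ⟨D, hD, hDm⟩ := h2.2 a ha Y hY2 m (by omega) hmY
      exact ⟨D, mem_union_right _ hD, hDm⟩
  · have hc1 : Y.card ≤ A.card := card_le_card (htop Y hY1)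
    have hc2 : a.card ≤ X.card := card_le_card (hbot X hX2)
    omega
  · obtain ⟨D, hD, hDm⟩ := h2.2 X hX2 Y hY2 m hXm hmY
    exact ⟨D, mem_union_right _ hD, hDm⟩

def IsDecomp (K : ℕ) (F : Finset (Finset ℕ)) (C : ℕ → Finset (Finset ℕ)) : Prop :=
  (∀ i < K, SkiplessChain (C i)) ∧
  (∀ i < K, ∀ j < K, i ≠ j → Disjoint (C i) (C j)) ∧
  (∀ X : Finset ℕ, X ∈ F ↔ ∃ i < K, X ∈ C i)

def Tset (K t : ℕ) (C : ℕ → Finset (Finset ℕ)) : Finset ℕ :=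
  (Finset.range K).filter fun j => (∃ A ∈ C j, A.card = t - 1) ∧ (∃ B ∈ C j, B.card = t)

def GoodIn (K t : ℕ) (C : ℕ → Finset (Finset ℕ)) (x : Finset ℕ) : Prop :=
  ∃ j, j < K ∧ x ∈ C j ∧ ∃ A ∈ C j, A.card = t - 1

lemma decomp_mem_F {K : ℕ} {F : Finset (Finset ℕ)} {C : ℕ → Finset (Finset ℕ)}
    (hC : IsDecomp K F C) {i : ℕ} (hi : i < K) {X : Finset ℕ} (hX : X ∈ C i) : X ∈ F :=
  (hC.2.2 X).2 ⟨i, hi, hX⟩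

lemma sat_antichain_of_not_mem {n k : ℕ} {F : Finset (Finset ℕ)} {X : Finset ℕ}
    (hsat : AntichainSat n k F) (hX : X ⊆ Finset.range n) (hXF : X ∉ F) :
    ∃ 𝒜 : Finset (Finset ℕ), 𝒜 ⊆ F ∧ 𝒜.card = k - 1 ∧
      IsAntichain (· ⊆ ·) (𝒜 : Set (Finset ℕ)) ∧ ∀ Y ∈ 𝒜, ¬ X ⊆ Y ∧ ¬ Y ⊆ X := by
  obtain ⟨hsub, hno, hadd⟩ := hsat
  obtain ⟨𝒜, h𝒜, hcard, hanti⟩ := hadd X hX hXF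
  have hXmem : X ∈ 𝒜 := by
    by_contra hXm
    refine hno ⟨𝒜, fun Y hY => ?_, hcard, hanti⟩
    rcases Finset.mem_insert.1 (h𝒜 hY) with rfl | h
    · exact absurd hY hXm
    · exact h
  refine ⟨𝒜.erase X, ?_, ?_, ?_, ?_⟩
  · intro Y hY
    have h1 := Finset.mem_erase.1 hY
    rcases Finset.mem_insert.1 (h𝒜 h1.2) with rfl | h
    · exact absurd rfl h1.1
    · exact h
  · rw [Finset.card_erase_of_mem hXmem, hcard]
  · exact hanti.subset (by intro Y hY; exact (Finset.mem_erase.1 (by exact_mod_cast hY)).2)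
  · intro Y hY
    have h1 := Finset.mem_erase.1 hY
    exact ⟨hanti hXmem h1.2 (Ne.symm h1.1), hanti h1.2 hXmem h1.1⟩

open Classical in
lemma coverage_contra {n k : ℕ} {F : Finset (Finset ℕ)}
    (hsat : AntichainSat n k F)
    (hex : ∃ X, X ⊆ Finset.range n ∧ X ∉ F)
    (S : Finset ℕ) (hS : S.card < k - 1)
    (D : ℕ → Finset (Finset ℕ)) (hch : ∀ j ∈ S, IsChainF (D j))
    (hcov : ∀ Y ∈ F, ∃ j ∈ S, Y ∈ D j) : False := by
  obtain ⟨X, hX, hXF⟩ := hex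
  obtain ⟨𝒜, h𝒜F, hcard, hanti, -⟩ := sat_antichain_of_not_mem hsat hX hXF
  have hkey : ∀ Y ∈ 𝒜, ∃ j ∈ S, Y ∈ D j := fun Y hY => hcov Y (h𝒜F hY)
  set g : Finset ℕ → ℕ := fun Y => if h : ∃ j ∈ S, Y ∈ D j then h.choose else 0 with hg
  have hgS : ∀ Y ∈ 𝒜, g Y ∈ S ∧ Y ∈ D (g Y) := by
    intro Y hY
    have h := hkey Y hY
    simp only [hg, dif_pos h]
    exact ⟨h.choose_spec.1, h.choose_spec.2⟩
  have hinj : Set.InjOn g ↑𝒜 := by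
    intro Y hY Z hZ hYZ
    by_contra hne
    have hYm : Y ∈ 𝒜 := by exact_mod_cast hY
    have hZm : Z ∈ 𝒜 := by exact_mod_cast hZ
    have h1 := hgS Y hYm
    have h2 := hgS Z hZm
    have h2' : Z ∈ D (g Y) := by rw [hYZ]; exact h2.2
    rcases hch _ h1.1 Y h1.2 Z h2' with h | h
    · exact hanti hY hZ hne h
    · exact hanti hZ hY (Ne.symm hne) h
  have hle := Finset.card_le_card_of_injOn g (fun Y hY => (hgS Y hY).1) hinj
  omega

open Classical in
lemma contraA {n k : ℕ} {F : Finset (Finset ℕ)} {C : ℕ → Finset (Finset ℕ)}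
    {i : ℕ} {a A : Finset ℕ}
    (hsat : AntichainSat n k F) (hC : IsDecomp (k-1) F C)
    (hi : i < k - 1) (ha : a ∈ C i) (hamin : ∀ X ∈ C i, a ⊆ X)
    (hAa : A ⊆ a) (hAF : A ∉ F) : False := by
  have haF : a ∈ F := decomp_mem_F hC hi ha
  have hA : A ⊆ Finset.range n := hAa.trans (hsat.1 a haF)
  obtain ⟨𝒜, h𝒜F, hcard, hanti, hinc⟩ := sat_antichain_of_not_mem hsat hA hAF
  set g : Finset ℕ → ℕ := fun Y => if h : ∃ j, j < k - 1 ∧ Y ∈ C j then h.choose else 0 with hg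
  have hgS : ∀ Y ∈ 𝒜, g Y < k - 1 ∧ Y ∈ C (g Y) := by
    intro Y hY
    have h : ∃ j, j < k - 1 ∧ Y ∈ C j := by
      obtain ⟨j, hj, hYj⟩ := (hC.2.2 Y).1 (h𝒜F hY)
      exact ⟨j, hj, hYj⟩
    simp only [hg, dif_pos h]
    exact ⟨h.choose_spec.1, h.choose_spec.2⟩
  have hinj : Set.InjOn g ↑𝒜 := by
    intro Y hY Z hZ hYZ
    by_contra hne
    have hYm : Y ∈ 𝒜 := by exact_mod_cast hY
    have hZm : Z ∈ 𝒜 := by exact_mod_cast hZ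
    have h1 := hgS Y hYm
    have h2 := hgS Z hZm
    have h2' : Z ∈ C (g Y) := by rw [hYZ]; exact h2.2
    rcases (hC.1 _ h1.1).1 Y h1.2 Z h2' with h | h
    · exact hanti hY hZ hne h
    · exact hanti hZ hY (Ne.symm hne) h
  have himg : 𝒜.image g = Finset.range (k-1) := by
    apply Finset.eq_of_subset_of_card_le
    · intro j hj
      obtain ⟨Y, hY, rfl⟩ := Finset.mem_image.1 hj
      exact Finset.mem_range.2 (hgS Y hY).1
    · rw [Finset.card_image_of_injOn hinj, hcard, Finset.card_range]
  have hiimg : i ∈ 𝒜.image g := by rw [himg]; exact Finset.mem_range.2 hi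
  obtain ⟨Y, hY, hgy⟩ := Finset.mem_image.1 hiimg
  have hYCi : Y ∈ C i := by rw [← hgy]; exact (hgS Y hY).2
  exact (hinc Y hY).1 (hAa.trans (hamin Y hYCi))

lemma fs_subset_of_eq {A B : Finset ℕ} (h : A = B) : A ⊆ B := by rw [h]

def swapC (C : ℕ → Finset (Finset ℕ)) (i c : ℕ) (A b : Finset ℕ) : ℕ → Finset (Finset ℕ) :=
  fun j => if j = i then C i ∪ (C c).filter (· ⊆ A)
    else if j = c then (C c).filter (b ⊆ ·) else C j

lemma swap_decomp {K t : ℕ} {F : Finset (Finset ℕ)} {C : ℕ → Finset (Finset ℕ)}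
    {i c : ℕ} {a A b : Finset ℕ}
    (hC : IsDecomp K F C) (hi : i < K) (hc : c < K) (hic : i ≠ c)
    (ha : a ∈ C i) (hat : a.card = t) (hamin : ∀ X ∈ C i, a ⊆ X)
    (hA : A ∈ C c) (hAt : A.card = t - 1) (hAa : A ⊆ a)
    (hb : b ∈ C c) (hbt : b.card = t) (ht : 1 ≤ t)
    (hnolow : ∀ X ∈ C i, t ≤ X.card) :
    IsDecomp K F (swapC C i c A b) ∧
      Tset K t (swapC C i c A b) = insert i ((Tset K t C).erase c) := by
  obtain ⟨hsk, hdisj, hcov⟩ := hC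
  have hchc : IsChainF (C c) := (hsk c hc).1
  have hchi : IsChainF (C i) := (hsk i hi).1
  have hci : c ≠ i := fun h => hic h.symm
  have hAb : A ⊆ b := chain_subset_of_card_le hchc hA hb (by omega)
  have hswi : swapC C i c A b i = C i ∪ (C c).filter (· ⊆ A) := by
    unfold swapC; rw [if_pos rfl]
  have hswc : swapC C i c A b c = (C c).filter (b ⊆ ·) := by
    unfold swapC; rw [if_neg hci, if_pos rfl]
  have hswo : ∀ j, j ≠ i → j ≠ c → swapC C i c A b j = C j := by
    intro j h1 h2; unfold swapC; rw [if_neg h1, if_neg h2]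
  have hsplit : ∀ X ∈ C c, X ⊆ A ∨ b ⊆ X := by
    intro X hX
    rcases hchc X hX A hA with h | h
    · exact Or.inl h
    · rcases hchc b hb X hX with h' | h'
      · exact Or.inr h'
      · have h1 : A.card ≤ X.card := Finset.card_le_card h
        have h2 : X.card ≤ b.card := Finset.card_le_card h'
        rcases Nat.eq_or_lt_of_le h1 with he | hlt
        · exact Or.inl (fs_subset_of_eq (chain_eq_of_card hchc hX hA he.symm))
        · exact Or.inr (fs_subset_of_eq (chain_eq_of_card hchc hb hX (by omega)))
  have hskmerge : SkiplessChain (C i ∪ (C c).filter (· ⊆ A)) := by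
    rw [Finset.union_comm]
    exact merge_skipless (lowerPart_skipless (hsk c hc) hA) (hsk i hi)
      (fun X hX => (Finset.mem_filter.1 hX).2) hamin
      (Finset.mem_filter.2 ⟨hA, Finset.Subset.refl A⟩) ha hAa (by omega)
  have hDJ : ∀ p q, p < K → q < K → p ≠ q → ∀ X, X ∈ C p → X ∈ C q → False := by
    intro p q hp hq hpq X h1 h2
    exact Finset.disjoint_left.1 (hdisj p hp q hq hpq) h1 h2
  have horig : ∀ j X, X ∈ swapC C i c A b j →
      (j = i ∧ (X ∈ C i ∨ (X ∈ C c ∧ X ⊆ A))) ∨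
      (j ≠ i ∧ j = c ∧ X ∈ C c ∧ b ⊆ X) ∨ (j ≠ i ∧ j ≠ c ∧ X ∈ C j) := by
    intro j X hX
    unfold swapC at hX
    split_ifs at hX with h1 h2
    · refine Or.inl ⟨h1, ?_⟩
      rcases Finset.mem_union.1 hX with h | h
      · exact Or.inl h
      · exact Or.inr (Finset.mem_filter.1 h)
    · exact Or.inr (Or.inl ⟨h1, h2, Finset.mem_filter.1 hX⟩)
    · exact Or.inr (Or.inr ⟨h1, h2, hX⟩)
  have hdecomp : IsDecomp K F (swapC C i c A b) := by
    refine ⟨?_, ?_, ?_⟩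
    · intro j hj
      by_cases hji : j = i
      · rw [hji, hswi]; exact hskmerge
      · by_cases hjc : j = c
        · rw [hjc, hswc]; exact upperPart_skipless (hsk c hc) hb
        · rw [hswo j hji hjc]; exact hsk j hj
    · intro j hj j' hj' hne
      rw [Finset.disjoint_left]
      intro X hX hX'
      rcases horig j X hX with ⟨hji, h1⟩ | ⟨hji, hjc, hXc, hbX⟩ | ⟨hji, hjc, hXj⟩ <;>
        rcases horig j' X hX' with ⟨hj'i, h1'⟩ | ⟨hj'i, hj'c, hXc', hbX'⟩ | ⟨hj'i, hj'c, hXj'⟩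
      · exact hne (hji.trans hj'i.symm)
      · rcases h1 with h | ⟨hXc2, hXA⟩
        · exact hDJ i c hi hc hic X h hXc'
        · have := Finset.card_le_card (hbX'.trans hXA); omega
      · rcases h1 with h | ⟨hXc2, hXA⟩
        · exact hDJ i j' hi hj' (fun h' => hj'i h'.symm) X h hXj'
        · exact hDJ c j' hc hj' (fun h' => hj'c h'.symm) X hXc2 hXj'
      · rcases h1' with h | ⟨hXc2, hXA⟩
        · exact hDJ c i hc hi hci X hXc h
        · have := Finset.card_le_card (hbX.trans hXA); omega
      · exact hne (hjc.trans hj'c.symm)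
      · exact hDJ c j' hc hj' (fun h' => hj'c h'.symm) X hXc hXj'
      · rcases h1' with h | ⟨hXc2, hXA⟩
        · exact hDJ j i hj hi hji X hXj h
        · exact hDJ j c hj hc hjc X hXj hXc2
      · exact hDJ j c hj hc hjc X hXj hXc'
      · exact hDJ j j' hj hj' hne X hXj hXj'
    · intro X
      constructor
      · intro hXF
        obtain ⟨j0, hj0, hXj0⟩ := (hcov X).1 hXF
        by_cases hj0i : j0 = i
        · refine ⟨i, hi, ?_⟩
          rw [hswi]
          exact Finset.mem_union_left _ (hj0i ▸ hXj0)
        · by_cases hj0c : j0 = c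
          · have hXc : X ∈ C c := hj0c ▸ hXj0
            rcases hsplit X hXc with h | h
            · refine ⟨i, hi, ?_⟩
              rw [hswi]
              exact Finset.mem_union_right _ (Finset.mem_filter.2 ⟨hXc, h⟩)
            · refine ⟨c, hc, ?_⟩
              rw [hswc]
              exact Finset.mem_filter.2 ⟨hXc, h⟩
          · refine ⟨j0, hj0, ?_⟩
            rw [hswo j0 hj0i hj0c]
            exact hXj0
      · rintro ⟨j, hj, hXj⟩
        rcases horig j X hXj with ⟨hji, h1⟩ | ⟨hji, hjc, hXc, hbX⟩ | ⟨hji, hjc, hXj'⟩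
        · rcases h1 with h | ⟨h, -⟩
          · exact (hcov X).2 ⟨i, hi, h⟩
          · exact (hcov X).2 ⟨c, hc, h⟩
        · exact (hcov X).2 ⟨c, hc, hXc⟩
        · exact (hcov X).2 ⟨j, hj, hXj'⟩
  refine ⟨hdecomp, ?_⟩
  ext j
  simp only [Tset, Finset.mem_filter, Finset.mem_insert, Finset.mem_erase, Finset.mem_range]
  by_cases hji : j = i
  · subst hji
    refine ⟨fun _ => Or.inl rfl, fun _ => ⟨hi, ?_, ?_⟩⟩
    · refine ⟨A, ?_, hAt⟩
      rw [hswi]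
      exact Finset.mem_union_right _ (Finset.mem_filter.2 ⟨hA, Finset.Subset.refl A⟩)
    · refine ⟨a, ?_, hat⟩
      rw [hswi]
      exact Finset.mem_union_left _ ha
  · by_cases hjc : j = c
    · subst hjc
      constructor
      · rintro ⟨-, ⟨A', hA', hA't⟩, -⟩
        rw [hswc] at hA'
        have hA'm := Finset.mem_filter.1 hA'
        have := Finset.card_le_card hA'm.2
        omega
      · rintro (h | ⟨hne, -⟩)
        · exact absurd h hji
        · exact absurd rfl hne
    · rw [hswo j hji hjc]
      constructor
      · rintro ⟨hj, h1, h2⟩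
        exact Or.inr ⟨hjc, hj, h1, h2⟩
      · rintro (h | ⟨-, hj, h1, h2⟩)
        · exact absurd h hji
        · exact ⟨hj, h1, h2⟩

lemma swapC_apply_i (C : ℕ → Finset (Finset ℕ)) (i c : ℕ) (A b : Finset ℕ) :
    swapC C i c A b i = C i ∪ (C c).filter (· ⊆ A) := by unfold swapC; rw [if_pos rfl]

lemma swapC_apply_c (C : ℕ → Finset (Finset ℕ)) {i c : ℕ} (A b : Finset ℕ) (h : c ≠ i) :
    swapC C i c A b c = (C c).filter (b ⊆ ·) := by unfold swapC; rw [if_neg h, if_pos rfl]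

lemma swapC_apply_other (C : ℕ → Finset (Finset ℕ)) {i c j : ℕ} (A b : Finset ℕ)
    (h1 : j ≠ i) (h2 : j ≠ c) : swapC C i c A b j = C j := by
  unfold swapC; rw [if_neg h1, if_neg h2]

open Classical in
lemma inner_walk {n k t : ℕ} {F : Finset (Finset ℕ)}
    (hsat : AntichainSat n k F) (hFne : ∃ X, X ⊆ Finset.range n ∧ X ∉ F) (ht : 1 ≤ t)
    (s : Finset (Finset ℕ)) (f : Finset ℕ → Finset ℕ)
    (hs : ∀ x ∈ s, x ∈ F ∧ x.card = t)
    (hfinj : Set.InjOn f ↑s)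
    (hfsub : ∀ x ∈ s, f x ⊆ x ∧ (f x).card = t - 1) :
    ∀ m : ℕ, ∀ W : Finset (Finset ℕ), W ⊆ s → (s \ W).card ≤ m →
      ∀ C : ℕ → Finset (Finset ℕ), IsDecomp (k-1) F C →
      (∀ w ∈ W, ∃ j, j < k - 1 ∧ w ∈ C j ∧ f w ∈ C j) →
      ∀ a, a ∈ s → a ∉ W →
      ∀ i, i < k - 1 → a ∈ C i → (∀ X ∈ C i, t ≤ X.card) →
      ∃ C' : ℕ → Finset (Finset ℕ), IsDecomp (k-1) F C' ∧
        (Tset (k-1) t C').card = (Tset (k-1) t C).card ∧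
        ∀ x ∈ s, ¬ GoodIn (k-1) t C' x → (¬ GoodIn (k-1) t C x ∧ x ≠ a) := by
  intro m
  induction m with
  | zero =>
    intro W hWs hm C hC hW a has haW i hi hai hbad
    exfalso
    have h1 : a ∈ s \ W := Finset.mem_sdiff.2 ⟨has, haW⟩
    have := Finset.card_pos.2 ⟨a, h1⟩
    omega
  | succ m ih =>
    intro W hWs hm C hC hW a has haW i hi hai hbad
    have hchi : IsChainF (C i) := (hC.1 i hi).1
    have hat : a.card = t := (hs a has).2
    have hamin : ∀ X ∈ C i, a ⊆ X := by
      intro X hX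
      rcases hchi a hai X hX with h | h
      · exact h
      · have h1 : t ≤ X.card := hbad X hX
        have h2 : X.card ≤ a.card := Finset.card_le_card h
        exact fs_subset_of_eq (chain_eq_of_card hchi hai hX (by omega))
    set A := f a with hAdef
    have hAa : A ⊆ a := (hfsub a has).1
    have hAt : A.card = t - 1 := (hfsub a has).2
    by_cases hAF : A ∈ F
    · obtain ⟨c, hc, hAc⟩ := (hC.2.2 A).1 hAF
      have hchc : IsChainF (C c) := (hC.1 c hc).1
      have hic : i ≠ c := by
        rintro rfl
        have := hbad A hAc
        omega
      have hci : c ≠ i := fun h => hic h.symm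
      by_cases hbex : ∃ b ∈ C c, b.card = t
      · obtain ⟨b, hbc, hbt⟩ := hbex
        have hswap := swap_decomp hC hi hc hic hai hat hamin hAc hAt hAa hbc hbt ht hbad
        set C1 := swapC C i c A b with hC1def
        have hC1dec : IsDecomp (k-1) F C1 := hswap.1
        have hcT : c ∈ Tset (k-1) t C := by
          refine Finset.mem_filter.2 ⟨Finset.mem_range.2 hc, ⟨A, hAc, hAt⟩, ⟨b, hbc, hbt⟩⟩
        have hiT : i ∉ Tset (k-1) t C := by
          intro hmem
          obtain ⟨-, ⟨A', hA', hA't⟩, -⟩ := Finset.mem_filter.1 hmem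
          have := hbad A' hA'
          omega
        have hTcard : (Tset (k-1) t C1).card = (Tset (k-1) t C).card := by
          rw [hswap.2, Finset.card_insert_of_notMem
            (fun hmem => hiT (Finset.mem_of_mem_erase hmem)),
            Finset.card_erase_of_mem hcT]
          have : 1 ≤ (Tset (k-1) t C).card := Finset.card_pos.2 ⟨c, hcT⟩
          omega
        have hgood_a : GoodIn (k-1) t C1 a := by
          refine ⟨i, hi, ?_, A, ?_, hAt⟩
          · rw [hC1def, swapC_apply_i]
            exact Finset.mem_union_left _ hai
          · rw [hC1def, swapC_apply_i]
            exact Finset.mem_union_right _ (Finset.mem_filter.2 ⟨hAc, Finset.Subset.refl A⟩)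
        have hba : b ≠ a := by
          intro h
          exact Finset.disjoint_left.1 (hC.2.1 i hi c hc hic) hai (h ▸ hbc)
        have htrans : ∀ x ∈ s, x ≠ b → GoodIn (k-1) t C x → GoodIn (k-1) t C1 x := by
          intro x hx hxb ⟨j, hj, hxj, A', hA'j, hA't⟩
          have hji : j ≠ i := by
            rintro rfl
            have := hbad A' hA'j
            omega
          have hjc : j ≠ c := by
            rintro rfl
            exact hxb (chain_eq_of_card hchc hxj hbc (by rw [(hs x hx).2, hbt]))
          exact ⟨j, hj, by rw [hC1def, swapC_apply_other C A b hji hjc]; exact hxj,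
            A', by rw [hC1def, swapC_apply_other C A b hji hjc]; exact hA'j, hA't⟩
        by_cases hbs : b ∈ s
        · -- recurse
          have hbW : b ∉ W := by
            intro hbWmem
            obtain ⟨j, hj, hbj, hfbj⟩ := hW b hbWmem
            have hjc : j = c := by
              by_contra hne
              exact Finset.disjoint_left.1 (hC.2.1 j hj c hc hne) hbj hbc
            subst hjc
            have hfb : f b = A := chain_eq_of_card hchc hfbj hAc
              (by rw [(hfsub b hbs).2, hAt])
            have : b = a := hfinj (by exact_mod_cast hbs) (by exact_mod_cast has) hfb
            exact hba this
          have hW's : insert a W ⊆ s := Finset.insert_subset has hWs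
          have hsdiff : s \ insert a W = (s \ W).erase a := by
            ext x
            simp only [Finset.mem_sdiff, Finset.mem_erase, Finset.mem_insert]
            tauto
          have hm' : (s \ insert a W).card ≤ m := by
            rw [hsdiff, Finset.card_erase_of_mem (Finset.mem_sdiff.2 ⟨has, haW⟩)]
            omega
          have hW' : ∀ w ∈ insert a W, ∃ j, j < k - 1 ∧ w ∈ C1 j ∧ f w ∈ C1 j := by
            intro w hw
            rcases Finset.mem_insert.1 hw with rfl | hwW
            · refine ⟨i, hi, ?_, ?_⟩
              · rw [hC1def, swapC_apply_i]; exact Finset.mem_union_left _ hai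
              · rw [hC1def, swapC_apply_i]
                exact Finset.mem_union_right _ (Finset.mem_filter.2 ⟨hAc, Finset.Subset.refl A⟩)
            · obtain ⟨j, hj, hwj, hfwj⟩ := hW w hwW
              have hji : j ≠ i := by
                rintro rfl
                have := hbad (f w) hfwj
                have := (hfsub w (hWs hwW)).2
                omega
              have hjc : j ≠ c := by
                rintro rfl
                have : w = b := chain_eq_of_card hchc hwj hbc
                  (by rw [(hs w (hWs hwW)).2, hbt])
                exact hbW (this ▸ hwW)
              exact ⟨j, hj, by rw [hC1def, swapC_apply_other C A b hji hjc]; exact hwj,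
                by rw [hC1def, swapC_apply_other C A b hji hjc]; exact hfwj⟩
          have hbW' : b ∉ insert a W := by
            simp only [Finset.mem_insert]
            push_neg
            exact ⟨hba, hbW⟩
          have hbC1 : b ∈ C1 c := by
            rw [hC1def, swapC_apply_c C A b hci]
            exact Finset.mem_filter.2 ⟨hbc, Finset.Subset.refl b⟩
          have hbadc : ∀ X ∈ C1 c, t ≤ X.card := by
            intro X hX
            rw [hC1def, swapC_apply_c C A b hci] at hX
            have := Finset.card_le_card (Finset.mem_filter.1 hX).2
            omega
          obtain ⟨C', hC'dec, hC'T, hC'good⟩ :=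
            ih (insert a W) hW's hm' C1 hC1dec hW' b hbs hbW' c hc hbC1 hbadc
          refine ⟨C', hC'dec, by rw [hC'T, hTcard], ?_⟩
          intro x hx hnx
          obtain ⟨h1, h2⟩ := hC'good x hx hnx
          have hxa : x ≠ a := by
            rintro rfl
            exact h1 hgood_a
          exact ⟨fun hgx => h1 (htrans x hx h2 hgx), hxa⟩
        · -- base: b not in s, stop here
          refine ⟨C1, hC1dec, hTcard, ?_⟩
          intro x hx hnx
          have hxa : x ≠ a := by
            rintro rfl
            exact hnx hgood_a
          have hxb : x ≠ b := by
            rintro rfl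
            exact hbs hx
          exact ⟨fun hgx => hnx (htrans x hx hxb hgx), hxa⟩
      · -- C c has no t-set: merge and contradiction
        exfalso
        have htop : ∀ X ∈ C c, X ⊆ A := by
          intro X hX
          rcases hchc X hX A hAc with h | h
          · exact h
          · by_cases hXt : t ≤ X.card
            · obtain ⟨D, hD, hDt⟩ := (hC.1 c hc).2 A hAc X hX t (by omega) hXt
              exact absurd ⟨D, hD, hDt⟩ hbex
            · have h2 : X.card ≤ A.card := by omega
              exact fs_subset_of_eq (Finset.eq_of_subset_of_card_le h h2).symm
        have hK1 : 1 ≤ k - 1 := by omega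
        have hDi : (fun j => if j = i then C c ∪ C i else C j) i = C c ∪ C i := by simp
        have hDo : ∀ j, j ≠ i → (fun j => if j = i then C c ∪ C i else C j) j = C j := by
          intro j h; simp [h]
        refine coverage_contra hsat hFne ((Finset.range (k-1)).erase c) ?_
          (fun j => if j = i then C c ∪ C i else C j) ?_ ?_
        · rw [Finset.card_erase_of_mem (Finset.mem_range.2 hc), Finset.card_range]
          omega
        · intro j hj
          by_cases hji : j = i
          · rw [hji, if_pos rfl]
            exact merge_chain hchc hchi
              (fun X hX Y hY => ((htop X hX).trans hAa).trans (hamin Y hY))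
          · rw [if_neg hji]
            exact (hC.1 j (Finset.mem_range.1 (Finset.mem_of_mem_erase hj))).1
        · intro Y hY
          obtain ⟨j0, hj0, hYj0⟩ := (hC.2.2 Y).1 hY
          by_cases hj0c : j0 = c
          · refine ⟨i, Finset.mem_erase.2 ⟨hic, Finset.mem_range.2 hi⟩, ?_⟩
            rw [if_pos rfl]
            exact Finset.mem_union_left _ (hj0c ▸ hYj0)
          · by_cases hj0i : j0 = i
            · refine ⟨i, Finset.mem_erase.2 ⟨hic, Finset.mem_range.2 hi⟩, ?_⟩
              rw [if_pos rfl]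
              exact Finset.mem_union_right _ (hj0i ▸ hYj0)
            · refine ⟨j0, Finset.mem_erase.2 ⟨hj0c, Finset.mem_range.2 hj0⟩, ?_⟩
              rw [if_neg hj0i]
              exact hYj0
    · exact absurd (contraA hsat hC hi hai hamin hAa hAF) id

open Classical in
lemma outer_count {n k t : ℕ} {F : Finset (Finset ℕ)}
    (hsat : AntichainSat n k F) (hFne : ∃ X, X ⊆ Finset.range n ∧ X ∉ F) (ht : 1 ≤ t)
    (s : Finset (Finset ℕ)) (f : Finset ℕ → Finset ℕ)
    (hs : ∀ x ∈ s, x ∈ F ∧ x.card = t)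
    (hfinj : Set.InjOn f ↑s)
    (hfsub : ∀ x ∈ s, f x ⊆ x ∧ (f x).card = t - 1) :
    ∀ m : ℕ, ∀ C : ℕ → Finset (Finset ℕ), IsDecomp (k-1) F C →
      (s.filter (fun x => ¬ GoodIn (k-1) t C x)).card ≤ m →
      s.card ≤ (Tset (k-1) t C).card := by
  have allgood : ∀ C : ℕ → Finset (Finset ℕ), IsDecomp (k-1) F C →
      (∀ x ∈ s, GoodIn (k-1) t C x) → s.card ≤ (Tset (k-1) t C).card := by
    intro C hC hgood
    set g : Finset ℕ → ℕ := fun x => if h : GoodIn (k-1) t C x then h.choose else 0 with hg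
    have hgspec : ∀ x ∈ s, g x < k - 1 ∧ x ∈ C (g x) ∧ ∃ A ∈ C (g x), A.card = t - 1 := by
      intro x hx
      have h := hgood x hx
      simp only [hg, dif_pos h]
      exact h.choose_spec
    refine Finset.card_le_card_of_injOn g ?_ ?_
    · intro x hx
      obtain ⟨h1, h2, h3⟩ := hgspec x hx
      exact Finset.mem_filter.2 ⟨Finset.mem_range.2 h1, h3, ⟨x, h2, (hs x hx).2⟩⟩
    · intro x hx y hy hxy
      have hxm : x ∈ s := by exact_mod_cast hx
      have hym : y ∈ s := by exact_mod_cast hy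
      have h1 := hgspec x hxm
      have h2 := hgspec y hym
      have h2' : y ∈ C (g x) := by rw [hxy]; exact h2.2.1
      exact chain_eq_of_card (hC.1 _ h1.1).1 h1.2.1 h2' (by rw [(hs x hxm).2, (hs y hym).2])
  intro m
  induction m with
  | zero =>
    intro C hC hcount
    refine allgood C hC ?_
    intro x hx
    by_contra hbad
    have : x ∈ s.filter (fun x => ¬ GoodIn (k-1) t C x) := Finset.mem_filter.2 ⟨hx, hbad⟩
    have := Finset.card_pos.2 ⟨x, this⟩
    omega
  | succ m ih =>
    intro C hC hcount
    by_cases hne : (s.filter (fun x => ¬ GoodIn (k-1) t C x)).Nonempty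
    · obtain ⟨a, ha⟩ := hne
      have has : a ∈ s := (Finset.mem_filter.1 ha).1
      have hbad' : ¬ GoodIn (k-1) t C a := (Finset.mem_filter.1 ha).2
      obtain ⟨i, hi, hai⟩ := (hC.2.2 a).1 (hs a has).1
      have hbadCi : ∀ X ∈ C i, t ≤ X.card := by
        by_contra hcon
        push_neg at hcon
        obtain ⟨X, hX, hXlt⟩ := hcon
        obtain ⟨D, hD, hDt⟩ := (hC.1 i hi).2 X hX a hai (t-1)
          (by omega) (by rw [(hs a has).2]; omega)
        exact hbad' ⟨i, hi, hai, D, hD, hDt⟩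
      obtain ⟨C', hC'dec, hC'T, hC'good⟩ :=
        inner_walk hsat hFne ht s f hs hfinj hfsub s.card ∅ (Finset.empty_subset s)
          (by rw [Finset.sdiff_empty]) C hC
          (fun w hw => absurd hw (Finset.notMem_empty w)) a has
          (Finset.notMem_empty a) i hi hai hbadCi
      have hsub : s.filter (fun x => ¬ GoodIn (k-1) t C' x) ⊆
          (s.filter (fun x => ¬ GoodIn (k-1) t C x)).erase a := by
        intro x hx
        obtain ⟨hx1, hx2⟩ := Finset.mem_filter.1 hx
        obtain ⟨h1, h2⟩ := hC'good x hx1 hx2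
        exact Finset.mem_erase.2 ⟨h2, Finset.mem_filter.2 ⟨hx1, h1⟩⟩
      have hcount' : (s.filter (fun x => ¬ GoodIn (k-1) t C' x)).card ≤ m := by
        have h1 := Finset.card_le_card hsub
        rw [Finset.card_erase_of_mem ha] at h1
        omega
      have := ih C' hC'dec hcount'
      omega
    · rw [Finset.not_nonempty_iff_eq_empty, Finset.filter_eq_empty_iff] at hne
      refine allgood C hC ?_
      intro x hx
      by_contra hbad
      exact hne hx hbad


open Classical in
theorem stmt16 (n k : ℕ) (F : Finset (Finset ℕ))
    (hFne : F ≠ (Finset.range n).powerset) (hsat : AntichainSat n k F)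
    (C : ℕ → Finset (Finset ℕ))
    (hCsk : ∀ i < k - 1, SkiplessChain (C i))
    (hCdisj : ∀ i < k - 1, ∀ j < k - 1, i ≠ j → Disjoint (C i) (C j))
    (hCdecomp : ∀ X : Finset ℕ, X ∈ F ↔ ∃ i < k - 1, X ∈ C i) :
    ∀ t : ℕ, 1 ≤ t → t ≤ n →
      (F.filter (fun A => A.card = t - 1 ∧
        ∃ i < k - 1, A ∈ C i ∧ ∃ B ∈ C i, B.card = t ∧ B ∈ F)).card =
      nu (F.filter (fun A => A.card = t)) := by
  intro t ht htn
  have hC : IsDecomp (k-1) F C := ⟨hCsk, hCdisj, hCdecomp⟩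
  have hFne' : ∃ X, X ⊆ Finset.range n ∧ X ∉ F := by
    by_contra hcon
    push_neg at hcon
    apply hFne
    apply Finset.Subset.antisymm
    · intro X hX
      exact Finset.mem_powerset.2 (hsat.1 X hX)
    · intro X hX
      exact hcon X (Finset.mem_powerset.1 hX)
  -- Step 1 : the D-set has the same size as Tset
  have hDT : (F.filter (fun A => A.card = t - 1 ∧
      ∃ i < k - 1, A ∈ C i ∧ ∃ B ∈ C i, B.card = t ∧ B ∈ F)).card
      = (Tset (k-1) t C).card := by
    set gD : Finset ℕ → ℕ := fun A => if h : ∃ i, i < k - 1 ∧ A ∈ C i then h.choose else 0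
      with hgDdef
    have hgDspec : ∀ A : Finset ℕ, (∃ i, i < k - 1 ∧ A ∈ C i) → gD A < k - 1 ∧ A ∈ C (gD A) := by
      intro A h
      simp only [hgDdef, dif_pos h]
      exact h.choose_spec
    have huniq : ∀ (A : Finset ℕ) (j : ℕ), j < k - 1 → A ∈ C j → gD A = j := by
      intro A j hj hAj
      obtain ⟨h1, h2⟩ := hgDspec A ⟨j, hj, hAj⟩
      by_contra hne
      exact Finset.disjoint_left.1 (hCdisj _ h1 j hj hne) h2 hAj
    refine Finset.card_bij (fun A _ => gD A) ?_ ?_ ?_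
    · intro A hA
      obtain ⟨hAF, hAt, i0, hi0, hAi0, B, hBi0, hBt, hBF⟩ := Finset.mem_filter.1 hA
      show gD A ∈ Tset (k-1) t C
      rw [huniq A i0 hi0 hAi0]
      exact Finset.mem_filter.2 ⟨Finset.mem_range.2 hi0, ⟨A, hAi0, hAt⟩, ⟨B, hBi0, hBt⟩⟩
    · intro A₁ hA₁ A₂ hA₂ heq
      obtain ⟨hAF₁, hAt₁, i1, hi1, hAi1, -⟩ := Finset.mem_filter.1 hA₁
      obtain ⟨hAF₂, hAt₂, i2, hi2, hAi2, -⟩ := Finset.mem_filter.1 hA₂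
      have heq2 : gD A₁ = gD A₂ := heq
      rw [huniq A₁ i1 hi1 hAi1, huniq A₂ i2 hi2 hAi2] at heq2
      subst heq2
      exact chain_eq_of_card (hCsk _ hi1).1 hAi1 hAi2 (by rw [hAt₁, hAt₂])
    · intro j hj
      obtain ⟨hjr, ⟨A, hAj, hAt⟩, ⟨B, hBj, hBt⟩⟩ := Finset.mem_filter.1 hj
      have hjK := Finset.mem_range.1 hjr
      have hAF : A ∈ F := (hCdecomp A).2 ⟨j, hjK, hAj⟩
      have hBF : B ∈ F := (hCdecomp B).2 ⟨j, hjK, hBj⟩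
      have hA : A ∈ F.filter (fun A => A.card = t - 1 ∧
          ∃ i < k - 1, A ∈ C i ∧ ∃ B ∈ C i, B.card = t ∧ B ∈ F) :=
        Finset.mem_filter.2 ⟨hAF, hAt, j, hjK, hAj, B, hBj, hBt, hBF⟩
      exact ⟨A, hA, huniq A j hjK hAj⟩
  rw [hDT]
  set Ft := F.filter (fun A => A.card = t) with hFtdef
  -- Step 2a : nu Ft ≤ (Tset).card
  have hnu_le : nu Ft ≤ (Tset (k-1) t C).card := by
    apply csSup_le
    · refine ⟨0, ∅, Finset.empty_subset _, Finset.card_empty, id, ?_, ?_⟩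
      · intro x hx
        simp at hx
      · intro a ha
        simp at ha
    · rintro m ⟨s, hsub, hcard, f, hinj, hprop⟩
      have hs : ∀ x ∈ s, x ∈ F ∧ x.card = t := by
        intro x hx
        exact Finset.mem_filter.1 (hsub hx)
      have hfsub : ∀ x ∈ s, f x ⊆ x ∧ (f x).card = t - 1 := by
        intro x hx
        refine ⟨(hprop x hx).2, ?_⟩
        obtain ⟨B, hB, y, hy, hBe⟩ := Finset.mem_shadow_iff.1 (hprop x hx).1
        rw [← hBe, Finset.card_erase_of_mem hy, (Finset.mem_filter.1 hB).2]
      rw [← hcard]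
      exact outer_count hsat hFne' ht s f hs hinj hfsub s.card C hC
        (Finset.card_filter_le _ _)
  -- Step 2b : (Tset).card ≤ nu Ft
  have hnu_ge : (Tset (k-1) t C).card ≤ nu Ft := by
    set gB : ℕ → Finset ℕ := fun j => if h : ∃ B ∈ C j, B.card = t then h.choose else ∅
      with hgBdef
    have hgBspec : ∀ j ∈ Tset (k-1) t C, gB j ∈ C j ∧ (gB j).card = t := by
      intro j hj
      obtain ⟨-, -, hBex⟩ := Finset.mem_filter.1 hj
      simp only [hgBdef, dif_pos hBex]
      obtain ⟨h1, h2⟩ := hBex.choose_spec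
      exact ⟨h1, h2⟩
    set sM := (Tset (k-1) t C).image gB with hsMdef
    set fM : Finset ℕ → Finset ℕ := fun X =>
      if h : ∃ A', A'.card = t - 1 ∧ A' ⊆ X ∧ ∃ j, j < k - 1 ∧ A' ∈ C j ∧ X ∈ C j
      then h.choose else ∅ with hfMdef
    have hsMFt : sM ⊆ Ft := by
      intro X hX
      obtain ⟨j, hjT, rfl⟩ := Finset.mem_image.1 hX
      have hjK := Finset.mem_range.1 (Finset.mem_filter.1 hjT).1
      exact Finset.mem_filter.2 ⟨(hCdecomp _).2 ⟨j, hjK, (hgBspec j hjT).1⟩,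
        (hgBspec j hjT).2⟩
    have hfMspec : ∀ X ∈ sM, (fM X).card = t - 1 ∧ fM X ⊆ X ∧
        ∃ j, j < k - 1 ∧ fM X ∈ C j ∧ X ∈ C j := by
      intro X hX
      obtain ⟨j, hjT, rfl⟩ := Finset.mem_image.1 hX
      have hjspec := hgBspec j hjT
      obtain ⟨hjr, ⟨A, hAj, hAt⟩, -⟩ := Finset.mem_filter.1 hjT
      have hjK := Finset.mem_range.1 hjr
      have hex : ∃ A', A'.card = t - 1 ∧ A' ⊆ gB j ∧
          ∃ j', j' < k - 1 ∧ A' ∈ C j' ∧ gB j ∈ C j' :=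
        ⟨A, hAt, chain_subset_of_card_le (hCsk j hjK).1 hAj hjspec.1 (by omega),
          j, hjK, hAj, hjspec.1⟩
      simp only [hfMdef, dif_pos hex]
      exact hex.choose_spec
    have hchain_mem : ∀ X ∈ sM, ∀ j, j < k - 1 → X ∈ C j → ∀ j', j' < k - 1 → X ∈ C j' → j = j' := by
      intro X hX j hj hXj j' hj' hXj'
      by_contra hne
      exact Finset.disjoint_left.1 (hCdisj j hj j' hj' hne) hXj hXj'
    have hmem : (Tset (k-1) t C).card ∈ {m | ∃ s ⊆ Ft, s.card = m ∧
        ∃ f : Finset ℕ → Finset ℕ, Set.InjOn f ↑s ∧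
          ∀ a ∈ s, f a ∈ Finset.shadow Ft ∧ f a ⊆ a} := by
      have hgBinj : Set.InjOn gB ↑(Tset (k-1) t C) := by
        intro j hj j' hj' heq
        have hjm : j ∈ Tset (k-1) t C := by exact_mod_cast hj
        have hj'm : j' ∈ Tset (k-1) t C := by exact_mod_cast hj'
        have h1 := (hgBspec j hjm).1
        have h2 := (hgBspec j' hj'm).1
        rw [← heq] at h2
        by_contra hne
        exact Finset.disjoint_left.1 (hCdisj j (Finset.mem_range.1 (Finset.mem_filter.1 hjm).1)
          j' (Finset.mem_range.1 (Finset.mem_filter.1 hj'm).1) hne) h1 h2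
      refine ⟨sM, hsMFt, ?_, fM, ?_, ?_⟩
      · rw [hsMdef, Finset.card_image_of_injOn hgBinj]
      · intro X hX Y hY heq
        have hXm : X ∈ sM := by exact_mod_cast hX
        have hYm : Y ∈ sM := by exact_mod_cast hY
        obtain ⟨-, -, j, hj, hfXj, hXj⟩ := hfMspec X hXm
        obtain ⟨-, -, j', hj', hfYj, hYj⟩ := hfMspec Y hYm
        have hfYj2 : fM X ∈ C j' := by rw [heq]; exact hfYj
        have hjj' : j = j' := by
          by_contra hne
          exact Finset.disjoint_left.1 (hCdisj j hj j' hj' hne) hfXj hfYj2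
        subst hjj'
        exact chain_eq_of_card (hCsk j hj).1 hXj hYj
          (by rw [(Finset.mem_filter.1 (hsMFt hXm)).2, (Finset.mem_filter.1 (hsMFt hYm)).2])
      · intro X hX
        obtain ⟨hcard, hsubX, j, hj, hfXj, hXj⟩ := hfMspec X hX
        refine ⟨?_, hsubX⟩
        rw [Finset.mem_shadow_iff_insert_mem]
        have hXt : X.card = t := (Finset.mem_filter.1 (hsMFt hX)).2
        have hdiff : (X \ fM X).Nonempty := by
          rw [← Finset.card_pos, Finset.card_sdiff_of_subset hsubX]
          omega
        obtain ⟨y, hy⟩ := hdiff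
        have hyX : y ∈ X := (Finset.mem_sdiff.1 hy).1
        have hyf : y ∉ fM X := (Finset.mem_sdiff.1 hy).2
        refine ⟨y, hyf, ?_⟩
        have hins : insert y (fM X) = X := by
          apply Finset.eq_of_subset_of_card_le
          · exact Finset.insert_subset hyX hsubX
          · rw [Finset.card_insert_of_notMem hyf]
            omega
        rw [hins]
        exact hsMFt hX
    refine le_csSup ?_ hmem
    refine ⟨Ft.card, ?_⟩
    rintro m ⟨s, hsub, hcard, -⟩
    rw [← hcard]
    exact Finset.card_le_card hsub
  omega
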